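/- Let 1 ≤ α < 2, ℓ > 0, and H(A) = ℓ |A|^α. Then for every λ ∈ ℝ^{3×3} with λ ≠ 0 and every μ ∈ ℝ^{3×3}, g_H(λ, μ) = +∞. -/
import Mathlib


open scoped BigOperators

noncomputable section

/-- `3 × 3` real matrices, as functions of (row, column). -/
abbrev M33 := Fin 3 → Fin 3 → ℝ

/-- The Levi-Civita symbol on indices in `Fin 3`. -/
def eps (i j k : Fin 3) : ℝ :=
  ((i.val : ℝ) - j.val) * ((j.val : ℝ) - k.val) * ((k.val : ℝ) - i.val) / 2

/-- The contraction `X : Y = Σ_{i,j} X_{ij} Y_{ij}`. -/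
def dotM (X Y : M33) : ℝ := ∑ i, ∑ j, X i j * Y i j

/-- `T(A)_{Zp} = ε_{pqr} ε_{ZBC} A_{Bq} A_{Cr}`. -/
def Tmap (A : M33) : M33 :=
  fun Z p => ∑ q, ∑ r, ∑ B, ∑ C, eps p q r * eps Z B C * A B q * A C r

/-- The Frobenius norm on `M33`. -/
def fnorm (A : M33) : ℝ := Real.sqrt (∑ i, ∑ j, (A i j) ^ 2)

/-- `g_H(λ, μ) = sup_{A} ( A:μ + λ:T(A) − H(A) )`, valued in `ℝ ∪ {±∞}` (the
supremum is never `-∞` since `H` is real-valued). -/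
def gH (H : M33 → ℝ) (lam mu : M33) : EReal :=
  ⨆ A : M33, ((dotM A mu + dotM lam (Tmap A) - H A : ℝ) : EReal)

/-- Auxiliary matrix with two nonzero entries whose `T`-image pairs with `lam`. -/
def Amat (Z p : Fin 3) (s : ℝ) : M33 :=
  fun i j => (if i = Z + 1 ∧ j = p + 1 then s else 0) + (if i = Z + 2 ∧ j = p + 2 then 1 else 0)

set_option maxHeartbeats 2000000 in
lemma key (lam : M33) (Z p : Fin 3) (s : ℝ) :
    dotM lam (Tmap (Amat Z p s)) = 2 * s * lam Z p := by
  fin_cases Z <;> fin_cases p <;>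
    simp [dotM, Tmap, Amat, eps, Fin.sum_univ_succ] <;>
    ring

lemma dotM_smul (t : ℝ) (A mu : M33) :
    dotM (fun i j => t * A i j) mu = t * dotM A mu := by
  unfold dotM
  simp only [Finset.mul_sum]
  exact Finset.sum_congr rfl fun i _ => Finset.sum_congr rfl fun j _ => by ring

lemma dotM_Tmap_smul (t : ℝ) (lam A : M33) :
    dotM lam (Tmap (fun i j => t * A i j)) = t ^ 2 * dotM lam (Tmap A) := by
  unfold dotM Tmap
  simp only [Finset.mul_sum]
  refine Finset.sum_congr rfl fun i _ => Finset.sum_congr rfl fun j _ => ?_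
  refine Finset.sum_congr rfl fun q _ => Finset.sum_congr rfl fun r _ =>
    Finset.sum_congr rfl fun B _ => Finset.sum_congr rfl fun C _ => by ring

lemma fnorm_smul (t : ℝ) (ht : 0 ≤ t) (A : M33) :
    fnorm (fun i j => t * A i j) = t * fnorm A := by
  unfold fnorm
  have h : (∑ i, ∑ j, (t * A i j) ^ 2) = t ^ 2 * ∑ i, ∑ j, (A i j) ^ 2 := by
    simp only [Finset.mul_sum]
    exact Finset.sum_congr rfl fun i _ => Finset.sum_congr rfl fun j _ => by ring
  rw [h, Real.sqrt_mul (sq_nonneg t), Real.sqrt_sq ht]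

theorem stmt12 (α ℓ : ℝ) (hα1 : 1 ≤ α) (hα2 : α < 2) (hℓ : 0 < ℓ)
    (lam : M33) (hlam : lam ≠ 0) (mu : M33) :
    gH (fun A => ℓ * fnorm A ^ α) lam mu = ⊤ := by
  obtain ⟨Z, hZ⟩ := Function.ne_iff.mp hlam
  obtain ⟨p, hp⟩ := Function.ne_iff.mp hZ
  have hp : lam Z p ≠ 0 := by simpa using hp
  set A0 : M33 := Amat Z p (lam Z p) with hA0
  have hc : dotM lam (Tmap A0) = 2 * (lam Z p) ^ 2 := by
    rw [hA0, key]; ring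
  have hcpos : (0:ℝ) < 2 * (lam Z p) ^ 2 := by positivity
  set c : ℝ := 2 * (lam Z p) ^ 2 with hcdef
  set m : ℝ := dotM A0 mu with hmdef
  set n : ℝ := fnorm A0 with hndef
  have hn : 0 ≤ n := Real.sqrt_nonneg _
  rw [gH, iSup_eq_top]
  intro b hb
  obtain ⟨x, hbx, -⟩ := EReal.lt_iff_exists_real_btwn.mp hb
  have h2a : (0:ℝ) < 2 - α := by linarith
  have hbase : (0:ℝ) < (ℓ * n ^ α + |m| + |x| + 1) / c := by positivity
  set t : ℝ := max 1 (((ℓ * n ^ α + |m| + |x| + 1) / c) ^ ((2 - α)⁻¹)) with htdef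
  have ht1 : (1:ℝ) ≤ t := le_max_left _ _
  have ht0 : (0:ℝ) < t := lt_of_lt_of_le one_pos ht1
  have hstep : (ℓ * n ^ α + |m| + |x| + 1) / c ≤ t ^ (2 - α) := by
    calc (ℓ * n ^ α + |m| + |x| + 1) / c
        = ((((ℓ * n ^ α + |m| + |x| + 1) / c) ^ ((2 - α)⁻¹)) ^ (2 - α)) := by
          rw [← Real.rpow_mul hbase.le, inv_mul_cancel₀ h2a.ne', Real.rpow_one]
      _ ≤ t ^ (2 - α) :=
          Real.rpow_le_rpow (Real.rpow_nonneg hbase.le _) (le_max_right _ _) h2a.le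
  have hct : ℓ * n ^ α + |m| + |x| + 1 ≤ c * t ^ (2 - α) := by
    rw [div_le_iff₀ hcpos] at hstep; linarith
  refine ⟨fun i j => t * A0 i j, lt_trans hbx ?_⟩
  have h1 : dotM (fun i j => t * A0 i j) mu = t * m := dotM_smul t A0 mu
  have h2 : dotM lam (Tmap (fun i j => t * A0 i j)) = t ^ 2 * c := by
    rw [dotM_Tmap_smul, hc]
  have h3 : fnorm (fun i j => t * A0 i j) = t * n := fnorm_smul t ht0.le A0
  rw [EReal.coe_lt_coe_iff, h1, h2, h3, Real.mul_rpow ht0.le hn]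
  -- now a real inequality
  have htu : t ≤ t ^ α := by
    calc t = t ^ (1:ℝ) := (Real.rpow_one t).symm
      _ ≤ t ^ α := Real.rpow_le_rpow_of_exponent_le ht1 hα1
  have hu1 : (1:ℝ) ≤ t ^ α := le_trans ht1 htu
  have hu0 : (0:ℝ) ≤ t ^ α := by linarith
  have ht2 : t ^ 2 = t ^ α * t ^ (2 - α) := by
    rw [← Real.rpow_natCast t 2, ← Real.rpow_add ht0]
    norm_num
  have hma : -(t ^ α * |m|) ≤ t * m := by
    nlinarith [neg_abs_le m, abs_nonneg m, ht0.le, htu,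
      mul_le_mul_of_nonneg_left (neg_abs_le m) ht0.le,
      mul_le_mul_of_nonneg_right htu (abs_nonneg m)]
  have hF1 : t ^ α * (ℓ * n ^ α + |m| + |x| + 1) ≤ t ^ α * (c * t ^ (2 - α)) :=
    mul_le_mul_of_nonneg_left hct hu0
  have hF3 : (1:ℝ) * (|x| + 1) ≤ t ^ α * (|x| + 1) :=
    mul_le_mul_of_nonneg_right hu1 (by positivity)
  have hx' : x ≤ |x| := le_abs_self x
  nlinarith [hF1, hF3, hma, hx', ht2]
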